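/- The sequence v_n of approximants of the radical 1 + sqrt(2 + cbrt(3 + ...)) (with a_k = r_k = k) converges to a limit v, and for all n ≥ 2, 0 ≤ v - v_n ≤ 3^{1/3} / ((n-1)·(n-1)!). -/

import Mathlib

/-- `rad a r n i = (a i + (a (i+1) + ⋯ + (a n) ^ (1/r n)) ^ (1/r (i+1))) ^ (1/r i)`. -/
noncomputable def rad (a : ℕ → ℝ) (r : ℕ → ℕ) (n : ℕ) : ℕ → ℝ
  | i => if _ : i ≤ n then (a i + rad a r n (i + 1)) ^ ((r i : ℝ)⁻¹) else 0
termination_by i => n + 1 - i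
decreasing_by omega

/-- The `n`-th approximant of `1 + sqrt (2 + (3 + (4 + ⋯) ^ (1/4)) ^ (1/3))`,
with `a k = r k = k`. -/
noncomputable def v (n : ℕ) : ℝ := rad (fun k => (k : ℝ)) (fun k => k) n 1

noncomputable def R (n i : ℕ) : ℝ := rad (fun k => (k : ℝ)) (fun k => k) n i

lemma R_def (n i : ℕ) : R n i = if i ≤ n then ((i:ℝ) + R n (i+1)) ^ ((i:ℝ)⁻¹) else 0 := by
  rw [R, rad, R]
  split_ifs <;> simp

lemma R_nonneg (n i : ℕ) : 0 ≤ R n i := by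
  rw [R_def]
  split_ifs with h
  · exact Real.rpow_nonneg (by have := R_nonneg n (i+1); positivity) _
  · exact le_refl 0
termination_by n + 1 - i
decreasing_by omega

lemma R_mono (n i : ℕ) : R n i ≤ R (n+1) i := by
  rw [R_def n i, R_def (n+1) i]
  split_ifs with h1 h2
  · apply Real.rpow_le_rpow (by have := R_nonneg n (i+1); positivity)
      (by have := R_mono n (i+1); linarith) (by positivity)
  · omega
  · exact Real.rpow_nonneg (by have := R_nonneg (n+1) (i+1); positivity) _
  · exact le_refl 0
termination_by n + 1 - i
decreasing_by omega

lemma bern {t u p : ℝ} (ht : 1 ≤ t) (hu : 0 ≤ u) (hp0 : 0 ≤ p) (hp1 : p ≤ 1) :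
    (t + u) ^ p ≤ t ^ p + p * u := by
  have ht0 : (0:ℝ) < t := lt_of_lt_of_le one_pos ht
  have h1 : (t + u) ^ p = t ^ p * (1 + u / t) ^ p := by
    rw [← Real.mul_rpow ht0.le (by positivity)]
    congr 1
    field_simp
  rw [h1]
  have h2 : (1 + u / t) ^ p ≤ 1 + p * (u / t) :=
    rpow_one_add_le_one_add_mul_self (by nlinarith [div_nonneg hu ht0.le]) hp0 hp1
  calc t ^ p * (1 + u / t) ^ p ≤ t ^ p * (1 + p * (u / t)) :=
        mul_le_mul_of_nonneg_left h2 (Real.rpow_nonneg ht0.le _)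
    _ = t ^ p + p * u * t ^ (p - 1) := by
        rw [Real.rpow_sub ht0, Real.rpow_one]; ring
    _ ≤ t ^ p + p * u * 1 := by
        have h3 : t ^ (p - 1) ≤ 1 := Real.rpow_le_one_of_one_le_of_nonpos ht (by linarith)
        have h4 : 0 ≤ p * u := by positivity
        nlinarith
    _ = t ^ p + p * u := by ring

lemma cube_le_pow (k : ℕ) (hk : 1 ≤ k) : k ^ 3 ≤ 3 ^ k := by
  induction k with
  | zero => omega
  | succ m ih =>
    rcases Nat.lt_or_ge m 3 with h | h
    · interval_cases m <;> norm_num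
    · have hm : m ^ 3 ≤ 3 ^ m := ih (by omega)
      have h1 : 3 * m ≤ m * m := Nat.mul_le_mul_right m h
      have h2 : 3 * (m * m) ≤ m * (m * m) := Nat.mul_le_mul_right (m * m) h
      have : (m + 1) ^ 3 ≤ 3 * m ^ 3 := by nlinarith
      calc (m + 1) ^ 3 ≤ 3 * m ^ 3 := this
        _ ≤ 3 * 3 ^ m := by omega
        _ = 3 ^ (m + 1) := by ring

lemma root_le (k : ℕ) (hk : 1 ≤ k) : (k : ℝ) ^ ((k : ℝ))⁻¹ ≤ (3 : ℝ) ^ ((3 : ℝ))⁻¹ := by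
  have hk0 : (0:ℝ) < (k:ℝ) := by exact_mod_cast hk
  have e1 : (k : ℝ) ^ ((k : ℝ))⁻¹ = ((k : ℝ) ^ (3:ℝ)) ^ (3 * (k:ℝ))⁻¹ := by
    rw [← Real.rpow_mul hk0.le]
    congr 1
    field_simp
  have e2 : (3 : ℝ) ^ ((3 : ℝ))⁻¹ = ((3 : ℝ) ^ ((k:ℝ))) ^ (3 * (k:ℝ))⁻¹ := by
    rw [← Real.rpow_mul (by norm_num)]
    congr 1
    field_simp
  have base : (k : ℝ) ^ (3:ℝ) ≤ (3 : ℝ) ^ ((k:ℝ)) := by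
    calc (k:ℝ) ^ (3:ℝ) = ((k ^ 3 : ℕ) : ℝ) := by
          rw [show (3:ℝ) = ((3:ℕ):ℝ) from by norm_num, Real.rpow_natCast]
          push_cast; ring
      _ ≤ ((3 ^ k : ℕ) : ℝ) := by exact_mod_cast cube_le_pow k hk
      _ = (3:ℝ) ^ ((k:ℝ)) := by rw [Real.rpow_natCast]; push_cast; ring
  rw [e1, e2]
  exact Real.rpow_le_rpow (by positivity) base (by positivity)

lemma R_key (n i : ℕ) (h2 : 2 ≤ i) (hin : i ≤ n + 1) :
    R (n+1) i ≤ R n i + (3:ℝ) ^ ((3:ℝ))⁻¹ * (Nat.factorial (i-1) : ℝ) / (Nat.factorial n : ℝ) := by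
  rcases Nat.lt_or_ge i (n+1) with hlt | hge
  · -- i ≤ n
    have hin' : i ≤ n := by omega
    have ih := R_key n (i+1) (by omega) (by omega)
    rw [R_def (n+1) i, R_def n i, if_pos (by omega : i ≤ n + 1), if_pos hin']
    set A := R n (i+1) with hA
    set A' := R (n+1) (i+1) with hA'
    have hAnn : 0 ≤ A := R_nonneg n (i+1)
    have hmono : A ≤ A' := R_mono n (i+1)
    have hi0 : (0:ℝ) < (i:ℝ) := by exact_mod_cast (by omega : 0 < i)
    have hi2 : (2:ℝ) ≤ (i:ℝ) := by exact_mod_cast h2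
    have hp0 : (0:ℝ) ≤ ((i:ℝ))⁻¹ := by positivity
    have hp1 : ((i:ℝ))⁻¹ ≤ 1 := by
      rw [inv_le_one_iff₀]; right; linarith
    have key : ((i:ℝ) + A') ^ ((i:ℝ))⁻¹ ≤ ((i:ℝ) + A) ^ ((i:ℝ))⁻¹ + ((i:ℝ))⁻¹ * (A' - A) := by
      have := bern (t := (i:ℝ) + A) (u := A' - A) (p := ((i:ℝ))⁻¹)
        (by linarith) (by linarith) hp0 hp1
      have e : (i:ℝ) + A + (A' - A) = (i:ℝ) + A' := by ring
      rwa [e] at this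
    have hfact : ((Nat.factorial i : ℕ) : ℝ) = (i:ℝ) * (Nat.factorial (i-1) : ℝ) := by
      rw [← Nat.mul_factorial_pred (by omega : i ≠ 0)]
      push_cast
      ring
    have hd : A' - A ≤ (3:ℝ) ^ ((3:ℝ))⁻¹ * (Nat.factorial i : ℝ) / (Nat.factorial n : ℝ) := by
      have : (i+1) - 1 = i := by omega
      rw [this] at ih
      linarith
    have hc : (0:ℝ) ≤ (3:ℝ) ^ ((3:ℝ))⁻¹ := by positivity
    have hstep : ((i:ℝ))⁻¹ * (A' - A)
        ≤ (3:ℝ) ^ ((3:ℝ))⁻¹ * (Nat.factorial (i-1) : ℝ) / (Nat.factorial n : ℝ) := by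
      have hnf : (0:ℝ) < (Nat.factorial n : ℝ) := by exact_mod_cast Nat.factorial_pos n
      calc ((i:ℝ))⁻¹ * (A' - A)
          ≤ ((i:ℝ))⁻¹ * ((3:ℝ) ^ ((3:ℝ))⁻¹ * (Nat.factorial i : ℝ) / (Nat.factorial n : ℝ)) := by
            apply mul_le_mul_of_nonneg_left hd hp0
        _ = (3:ℝ) ^ ((3:ℝ))⁻¹ * (Nat.factorial (i-1) : ℝ) / (Nat.factorial n : ℝ) := by
            rw [hfact]
            field_simp
    linarith
  · -- i = n + 1
    have hi : i = n + 1 := by omega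
    subst hi
    rw [R_def n (n+1), if_neg (by omega), R_def (n+1) (n+1), if_pos (le_refl _),
      R_def (n+1) (n+2), if_neg (by omega)]
    have : (n+1) - 1 = n := by omega
    rw [this]
    have hfn : (0:ℝ) < (Nat.factorial n : ℝ) := by exact_mod_cast Nat.factorial_pos n
    have := root_le (n+1) (by omega)
    push_cast
    rw [add_zero, zero_add]
    push_cast at this
    rw [mul_div_assoc, div_self (ne_of_gt hfn), mul_one]
    exact this
termination_by n + 2 - i
decreasing_by omega

lemma v_eq (n : ℕ) (hn : 1 ≤ n) : v n = 1 + R n 2 := by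
  have : v n = R n 1 := rfl
  rw [this, R_def n 1, if_pos hn]
  norm_num

lemma v_mono : Monotone v := by
  apply monotone_nat_of_le_succ
  intro n
  exact R_mono n 1

lemma v_step (n : ℕ) (hn : 1 ≤ n) :
    v (n+1) ≤ v n + (3:ℝ) ^ ((3:ℝ))⁻¹ / (Nat.factorial n : ℝ) := by
  rw [v_eq n hn, v_eq (n+1) (by omega)]
  have := R_key n 2 (le_refl 2) (by omega)
  simp only [Nat.factorial] at this
  norm_num at this ⊢
  linarith

lemma sum_bound (n m : ℕ) (hn : 2 ≤ n) :
    ∑ k ∈ Finset.Ico n m, (1:ℝ) / (Nat.factorial k : ℝ)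
      ≤ 1 / (((n:ℝ) - 1) * (Nat.factorial (n-1) : ℝ)) := by
  have hr0 : (0:ℝ) ≤ ((n:ℝ) + 1)⁻¹ := by positivity
  have hr1 : ((n:ℝ) + 1)⁻¹ < 1 := by
    apply inv_lt_one_of_one_lt₀
    have : (2:ℝ) ≤ (n:ℝ) := by exact_mod_cast hn
    linarith
  have hterm : ∀ j : ℕ, (1:ℝ) / (Nat.factorial (n + j) : ℝ)
      ≤ (1 / (Nat.factorial n : ℝ)) * (((n:ℝ) + 1)⁻¹) ^ j := by
    intro j
    have h := Nat.factorial_mul_pow_le_factorial (m := n) (n := j)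
    have hpos : (0:ℝ) < (Nat.factorial n : ℝ) * ((n:ℝ) + 1) ^ j := by positivity
    have hcast : (Nat.factorial n : ℝ) * ((n:ℝ) + 1) ^ j ≤ (Nat.factorial (n+j) : ℝ) := by
      exact_mod_cast h
    have e : (1 / (Nat.factorial n : ℝ)) * (((n:ℝ) + 1)⁻¹) ^ j
        = ((Nat.factorial n : ℝ) * ((n:ℝ) + 1) ^ j)⁻¹ := by
      rw [mul_inv, inv_pow, one_div]
    rw [one_div, e]
    exact inv_anti₀ hpos hcast
  calc ∑ k ∈ Finset.Ico n m, (1:ℝ) / (Nat.factorial k : ℝ)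
      = ∑ j ∈ Finset.range (m - n), (1:ℝ) / (Nat.factorial (n + j) : ℝ) := by
        rw [Finset.sum_Ico_eq_sum_range]
    _ ≤ ∑ j ∈ Finset.range (m - n), (1 / (Nat.factorial n : ℝ)) * (((n:ℝ) + 1)⁻¹) ^ j := by
        apply Finset.sum_le_sum
        intro j _
        exact hterm j
    _ = (1 / (Nat.factorial n : ℝ)) * ∑ j ∈ Finset.range (m - n), (((n:ℝ) + 1)⁻¹) ^ j := by
        rw [Finset.mul_sum]
    _ ≤ (1 / (Nat.factorial n : ℝ)) * (1 - ((n:ℝ) + 1)⁻¹)⁻¹ := by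
        apply mul_le_mul_of_nonneg_left _ (by positivity)
        rw [← tsum_geometric_of_lt_one hr0 hr1]
        exact Summable.sum_le_tsum (Finset.range (m - n)) (fun i _ => by positivity)
          (summable_geometric_of_lt_one hr0 hr1)
    _ ≤ 1 / (((n:ℝ) - 1) * (Nat.factorial (n-1) : ℝ)) := by
        have hfeq : (Nat.factorial n : ℝ) = (n:ℝ) * (Nat.factorial (n-1) : ℝ) := by
          rw [← Nat.mul_factorial_pred (by omega : n ≠ 0)]
          push_cast
          ring
        have hn1 : (2:ℝ) ≤ (n:ℝ) := by exact_mod_cast hn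
        have hf1 : (0:ℝ) < (Nat.factorial (n-1) : ℝ) := by
          exact_mod_cast Nat.factorial_pos (n-1)
        have e1 : (1 - ((n:ℝ) + 1)⁻¹)⁻¹ = ((n:ℝ) + 1) / (n:ℝ) := by
          rw [inv_eq_iff_eq_inv]
          field_simp
          ring
        rw [hfeq, e1, div_mul_div_comm,
          div_le_div_iff₀ (by nlinarith) (by nlinarith)]
        nlinarith [hf1, hn1]

lemma v_telescope (n : ℕ) (hn : 1 ≤ n) : ∀ m, n ≤ m →
    v m ≤ v n + (3:ℝ) ^ ((3:ℝ))⁻¹ * ∑ k ∈ Finset.Ico n m, (1:ℝ) / (Nat.factorial k : ℝ) := by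
  intro m hm
  induction m, hm using Nat.le_induction with
  | base => simp
  | succ m hm ih =>
    have h1 := v_step m (by omega)
    have h2 : ∑ k ∈ Finset.Ico n (m+1), (1:ℝ) / (Nat.factorial k : ℝ)
        = (∑ k ∈ Finset.Ico n m, (1:ℝ) / (Nat.factorial k : ℝ)) + 1 / (Nat.factorial m : ℝ) := by
      rw [Finset.sum_Ico_succ_top hm]
    rw [h2]
    have hc : (0:ℝ) ≤ (3:ℝ) ^ ((3:ℝ))⁻¹ := by positivity
    have : (3:ℝ) ^ ((3:ℝ))⁻¹ / (Nat.factorial m : ℝ)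
        = (3:ℝ) ^ ((3:ℝ))⁻¹ * (1 / (Nat.factorial m : ℝ)) := by ring
    rw [this] at h1
    calc v (m+1) ≤ v m + (3:ℝ) ^ ((3:ℝ))⁻¹ * (1 / (Nat.factorial m : ℝ)) := h1
      _ ≤ v n + (3:ℝ) ^ ((3:ℝ))⁻¹ * ∑ k ∈ Finset.Ico n m, (1:ℝ) / (Nat.factorial k : ℝ)
            + (3:ℝ) ^ ((3:ℝ))⁻¹ * (1 / (Nat.factorial m : ℝ)) := by linarith
      _ = _ := by ring

lemma v_key (n : ℕ) (hn : 2 ≤ n) : ∀ m,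
    v m ≤ v n + (3:ℝ) ^ ((3:ℝ))⁻¹ / (((n:ℝ) - 1) * (Nat.factorial (n-1) : ℝ)) := by
  intro m
  have hc : (0:ℝ) ≤ (3:ℝ) ^ ((3:ℝ))⁻¹ := by positivity
  have hn1 : (2:ℝ) ≤ (n:ℝ) := by exact_mod_cast hn
  have hf1 : (0:ℝ) < (Nat.factorial (n-1) : ℝ) := by exact_mod_cast Nat.factorial_pos (n-1)
  have hpos : (0:ℝ) < ((n:ℝ) - 1) * (Nat.factorial (n-1) : ℝ) := by nlinarith
  rcases le_or_gt m n with h | h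
  · have := v_mono h
    have : (0:ℝ) ≤ (3:ℝ) ^ ((3:ℝ))⁻¹ / (((n:ℝ) - 1) * (Nat.factorial (n-1) : ℝ)) := by
      positivity
    linarith [v_mono h]
  · calc v m ≤ v n + (3:ℝ) ^ ((3:ℝ))⁻¹ * ∑ k ∈ Finset.Ico n m, (1:ℝ) / (Nat.factorial k : ℝ) :=
        v_telescope n (by omega) m h.le
      _ ≤ v n + (3:ℝ) ^ ((3:ℝ))⁻¹ * (1 / (((n:ℝ) - 1) * (Nat.factorial (n-1) : ℝ))) := by
          have := sum_bound n m hn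
          nlinarith
      _ = v n + (3:ℝ) ^ ((3:ℝ))⁻¹ / (((n:ℝ) - 1) * (Nat.factorial (n-1) : ℝ)) := by ring

theorem example_radical_convergence :
    ∃ L : ℝ, Filter.Tendsto v Filter.atTop (nhds L) ∧
      ∀ n, 2 ≤ n →
        0 ≤ L - v n ∧
        L - v n ≤ (3 : ℝ) ^ ((3 : ℝ)⁻¹) / (((n : ℝ) - 1) * (Nat.factorial (n - 1) : ℝ)) := by
  have hbdd : BddAbove (Set.range v) := by
    refine ⟨v 2 + (3:ℝ) ^ ((3:ℝ))⁻¹ / (((2:ℕ):ℝ) - 1) / (Nat.factorial (2-1) : ℝ), ?_⟩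
    rintro x ⟨m, rfl⟩
    have := v_key 2 (le_refl 2) m
    calc v m ≤ v 2 + (3:ℝ) ^ ((3:ℝ))⁻¹ / ((((2:ℕ):ℝ) - 1) * (Nat.factorial (2-1) : ℝ)) := this
      _ = _ := by rw [div_div]
  refine ⟨⨆ n, v n, tendsto_atTop_ciSup v_mono hbdd, ?_⟩
  intro n hn
  constructor
  · have := le_ciSup hbdd n
    linarith
  · have : (⨆ k, v k) ≤ v n + (3:ℝ) ^ ((3:ℝ))⁻¹ / (((n:ℝ) - 1) * (Nat.factorial (n-1) : ℝ)) :=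
      ciSup_le (v_key n hn)
    linarith
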